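/- Let E, F be Banach spaces with unconditional Schauder bases 𝓕 = ((a_m, b_m*)) and 𝓖 = ((x_n, y_n*)). Then for every finitely supported family of scalars (λ_{i,j})_{1≤i≤k, 1≤j≤k'}, α^Bess_{𝓕,𝓖}(∑_{i=1}^k ∑_{j=1}^{k'} λ_{i,j} a_i ⊗ x_j) = sup_{‖f*‖_{E*} ≤ 1, ‖g*‖_{F*} ≤ 1} ∑_{i=1}^k ∑_{j=1}^{k'} |λ_{i,j}| |f*(a_i)| |g*(x_j)|. -/

import Mathlib

open Filter Finset TensorProduct

variable {𝕂 : Type*} [RCLike 𝕂]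
variable {E : Type*} [NormedAddCommGroup E] [NormedSpace 𝕂 E]
variable {F : Type*} [NormedAddCommGroup F] [NormedSpace 𝕂 F]

/-- `((a_m, b_m*))` is a Schauder frame for `E`: `x = ∑ b_m*(x) a_m` for all `x`. -/
def IsSchauderFrame (a : ℕ → E) (b : ℕ → E →L[𝕂] 𝕂) : Prop :=
  ∀ x : E, Tendsto (fun M : ℕ => ∑ m ∈ Finset.range M, b m x • a m) atTop (nhds x)

/-- `((a_m, b_m*))` is a Besselian Schauder frame for `E`. -/
def IsBesselianSchauderFrame (a : ℕ → E) (b : ℕ → E →L[𝕂] 𝕂) : Prop :=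
  IsSchauderFrame a b ∧
    ∃ B : ℝ, 0 < B ∧ ∀ (x : E) (f : E →L[𝕂] 𝕂),
      Summable (fun m : ℕ => ‖b m x‖ * ‖f (a m)‖) ∧
      ∑' m : ℕ, ‖b m x‖ * ‖f (a m)‖ ≤ B * ‖x‖ * ‖f‖

/-- `((a_m, b_m*))` is an unconditional Schauder basis of `E` (together with its
biorthogonal coefficient functionals): `b_i*(a_j) = δ_{i,j}` and every `x` is the
unconditional sum `∑ b_m*(x) a_m`. -/
def IsUnconditionalSchauderBasis (a : ℕ → E) (b : ℕ → E →L[𝕂] 𝕂) : Prop :=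
  (∀ i j : ℕ, b i (a j) = if i = j then 1 else 0) ∧
    ∀ x : E, ∀ σ : Equiv.Perm ℕ,
      Tendsto (fun M : ℕ => ∑ m ∈ Finset.range M, b (σ m) x • a (σ m)) atTop (nhds x)

/-- The Besselian constant `L_𝓕` of the frame `𝓕 = ((a_m, b_m*))`. -/
noncomputable def besselianConst (a : ℕ → E) (b : ℕ → E →L[𝕂] 𝕂) : ℝ :=
  ⨆ p : {x : E // ‖x‖ ≤ 1} × {f : E →L[𝕂] 𝕂 // ‖f‖ ≤ 1},
    ∑' m : ℕ, ‖b m p.1.1‖ * ‖p.2.1 (a m)‖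

/-- The Besselian norm `‖x‖^Bess_{E,𝓕} = sup_{‖f*‖ ≤ 1} ∑_m |b_m*(x) f*(a_m)|`. -/
noncomputable def bessNorm (a : ℕ → E) (b : ℕ → E →L[𝕂] 𝕂) (x : E) : ℝ :=
  ⨆ f : {f : E →L[𝕂] 𝕂 // ‖f‖ ≤ 1}, ∑' m : ℕ, ‖b m x‖ * ‖f.1 (a m)‖

/-- The dual norm on `E*` induced by the Besselian norm. -/
noncomputable def bessDualNorm (a : ℕ → E) (b : ℕ → E →L[𝕂] 𝕂) (f : E →L[𝕂] 𝕂) : ℝ :=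
  ⨆ x : {x : E // bessNorm a b x ≤ 1}, ‖f x.1‖

/-- The functional `f* ⊗ g*` on the algebraic tensor product:
`(f* ⊗ g*)(∑ x^r ⊗ y^r) = ∑ f*(x^r) g*(y^r)`. -/
noncomputable def dualPair (f : E →L[𝕂] 𝕂) (g : F →L[𝕂] 𝕂) : E ⊗[𝕂] F →ₗ[𝕂] 𝕂 :=
  TensorProduct.lift (((LinearMap.mul 𝕂 𝕂).compl₂ g.toLinearMap).comp f.toLinearMap)

/-- The quantity `Bess(∑_{r<R} x^r ⊗ y^r)` attached to a finite representation. -/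
noncomputable def bessRep (a : ℕ → E) (b : ℕ → E →L[𝕂] 𝕂)
    (c : ℕ → F) (d : ℕ → F →L[𝕂] 𝕂) (R : ℕ) (x : ℕ → E) (y : ℕ → F) : ℝ :=
  ⨆ fg : {f : E →L[𝕂] 𝕂 // ‖f‖ ≤ 1} × {g : F →L[𝕂] 𝕂 // ‖g‖ ≤ 1},
    ∑ r ∈ Finset.range R, ∑' mn : ℕ × ℕ,
      ‖b mn.1 (x r)‖ * ‖d mn.2 (y r)‖ * ‖fg.1.1 (a mn.1)‖ * ‖fg.2.1 (c mn.2)‖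

/-- The Besselian crossnorm `α^Bess_{𝓕,𝓖}` on `E ⊗ F`. -/
noncomputable def alphaBess (a : ℕ → E) (b : ℕ → E →L[𝕂] 𝕂)
    (c : ℕ → F) (d : ℕ → F →L[𝕂] 𝕂) (u : E ⊗[𝕂] F) : ℝ :=
  sInf {t : ℝ | ∃ (R : ℕ) (x : ℕ → E) (y : ℕ → F),
    u = ∑ r ∈ Finset.range R, x r ⊗ₜ[𝕂] y r ∧ t = bessRep a b c d R x y}

/-- The injective tensor norm on `E ⊗ F` formed with respect to the Besselian norms. -/
noncomputable def injNormBess (a : ℕ → E) (b : ℕ → E →L[𝕂] 𝕂)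
    (c : ℕ → F) (d : ℕ → F →L[𝕂] 𝕂) (u : E ⊗[𝕂] F) : ℝ :=
  ⨆ fg : {f : E →L[𝕂] 𝕂 // bessDualNorm a b f ≤ 1} ×
      {g : F →L[𝕂] 𝕂 // bessDualNorm c d g ≤ 1},
    ‖dualPair fg.1.1 fg.2.1 u‖

/-- The projective tensor norm on `E ⊗ F` formed with respect to the Besselian norms. -/
noncomputable def projNormBess (a : ℕ → E) (b : ℕ → E →L[𝕂] 𝕂)
    (c : ℕ → F) (d : ℕ → F →L[𝕂] 𝕂) (u : E ⊗[𝕂] F) : ℝ :=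
  sInf {t : ℝ | ∃ (R : ℕ) (x : ℕ → E) (y : ℕ → F),
    u = ∑ r ∈ Finset.range R, x r ⊗ₜ[𝕂] y r ∧
    t = ∑ r ∈ Finset.range R, bessNorm a b (x r) * bessNorm c d (y r)}

section Rearrangement

variable {G : Type*} [NormedAddCommGroup G] [CompleteSpace G]

/-- If the series `∑ v (σ m)` converges for every permutation `σ`, then `v` is summable. -/
lemma summable_of_forall_perm_tendsto (v : ℕ → G) (x : G)
    (h : ∀ σ : Equiv.Perm ℕ, Tendsto (fun M : ℕ => ∑ m ∈ Finset.range M, v (σ m))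
      atTop (nhds x)) : Summable v := by
  classical
  by_contra hns
  rw [summable_iff_vanishing_norm] at hns
  push_neg at hns
  obtain ⟨ε, hε, hbad⟩ := hns
  choose T hTdis hTbig using hbad
  set g : ℕ → ℕ := fun M => max (M + 1) ((T (Finset.range M)).sup id + 1) with hg
  set N : ℕ → ℕ := fun k => g^[k] 0 with hN
  have hN0 : N 0 = 0 := rfl
  have hNsucc : ∀ k, N (k + 1) = g (N k) := fun k => Function.iterate_succ_apply' g k 0
  have hNlt : ∀ k, N k < N (k + 1) := by
    intro k; rw [hNsucc]
    exact lt_of_lt_of_le (Nat.lt_succ_self _) (le_max_left _ _)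
  have hNmono : StrictMono N := strictMono_nat_of_lt_succ hNlt
  set t : ℕ → Finset ℕ := fun k => T (Finset.range (N k)) with ht
  have htsub : ∀ k, t k ⊆ Finset.Ico (N k) (N (k + 1)) := by
    intro k m hm
    rw [Finset.mem_Ico]
    constructor
    · by_contra hlt
      push_neg at hlt
      exact (Finset.disjoint_left.mp (hTdis (Finset.range (N k)))) hm (Finset.mem_range.mpr hlt)
    · rw [hNsucc]
      exact lt_of_lt_of_le (Nat.lt_succ_of_le (Finset.le_sup (f := id) hm)) (le_max_right _ _)
  have hNge : ∀ k, k ≤ N k := by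
    intro k
    induction k with
    | zero => exact Nat.zero_le _
    | succ k ih => exact Nat.succ_le_of_lt (lt_of_le_of_lt ih (hNlt k))
  have hexK : ∀ n : ℕ, ∃ k, n < N (k + 1) := fun n => ⟨n, lt_of_le_of_lt (hNge n) (hNlt n)⟩
  set K : ℕ → ℕ := fun n => Nat.find (hexK n) with hK
  have hKlt : ∀ n, n < N (K n + 1) := fun n => Nat.find_spec (hexK n)
  have hKle : ∀ n, N (K n) ≤ n := by
    intro n
    rcases Nat.eq_zero_or_pos (K n) with h0 | hpos
    · rw [h0, hN0]; exact Nat.zero_le _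
    · have hmin := Nat.find_min (hexK n) (Nat.sub_lt hpos Nat.one_pos)
      push_neg at hmin
      rwa [Nat.sub_add_cancel hpos] at hmin
  have hKeq : ∀ {n k : ℕ}, N k ≤ n → n < N (k + 1) → K n = k := by
    intro n k h1 h2
    rcases lt_trichotomy (K n) k with hlt | heq | hgt
    · have hh : N (K n + 1) ≤ N k := hNmono.monotone (by omega)
      have := hKlt n; omega
    · exact heq
    · have hh : N (k + 1) ≤ N (K n) := hNmono.monotone (by omega)
      have := hKle n; omega
  set I : ℕ → Finset ℕ := fun k => Finset.Ico (N k) (N (k + 1)) with hI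
  have htcard : ∀ k, (t k).card + N k ≤ N (k + 1) := by
    intro k
    have h1 : (t k).card ≤ (I k).card := Finset.card_le_card (htsub k)
    have h2 : (I k).card = N (k + 1) - N k := Nat.card_Ico _ _
    have := hNlt k
    omega
  set L : ℕ → List ℕ := fun k => ((I k \ t k).sort (· ≤ ·)) ++ ((t k).sort (· ≤ ·)) with hL
  have hLlen1 : ∀ k, ((I k \ t k).sort (· ≤ ·)).length = N (k + 1) - N k - (t k).card := by
    intro k
    rw [Finset.length_sort, Finset.card_sdiff_of_subset (htsub k), Nat.card_Ico]
  have hLlen : ∀ k, (L k).length = N (k + 1) - N k := by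
    intro k
    rw [hL]
    simp only [List.length_append, Finset.length_sort]
    have h3 : (I k \ t k).card + (t k).card = (I k).card :=
      Finset.card_sdiff_add_card_eq_card (htsub k)
    have h2 : (I k).card = N (k + 1) - N k := Nat.card_Ico _ _
    have h4 := htcard k
    omega
  have hLnodup : ∀ k, (L k).Nodup := by
    intro k
    refine List.Nodup.append (Finset.sort_nodup _ _) (Finset.sort_nodup _ _) ?_
    intro a ha hb
    rw [Finset.mem_sort] at ha hb
    exact (Finset.mem_sdiff.mp ha).2 hb
  have hLmem : ∀ k a, a ∈ L k ↔ a ∈ I k := by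
    intro k a
    rw [hL]
    simp only [List.mem_append, Finset.mem_sort, Finset.mem_sdiff]
    constructor
    · rintro (⟨h, _⟩ | h)
      · exact h
      · exact htsub k h
    · intro h
      by_cases ht' : a ∈ t k
      · exact Or.inr ht'
      · exact Or.inl ⟨h, ht'⟩
  set φ : ℕ → ℕ := fun n => (L (K n)).getD (n - N (K n)) 0 with hφ
  have hidx : ∀ n, n - N (K n) < (L (K n)).length := by
    intro n
    rw [hLlen]
    have := hKlt n; have := hKle n
    omega
  have hφeq : ∀ n, φ n = (L (K n))[n - N (K n)]'(hidx n) := by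
    intro n
    rw [hφ]
    exact List.getD_eq_getElem _ _ (hidx n)
  have hφmem : ∀ n, φ n ∈ I (K n) := by
    intro n
    rw [hφeq n, ← hLmem]
    exact List.getElem_mem _
  have hφIco : ∀ n, N (K n) ≤ φ n ∧ φ n < N (K n + 1) := by
    intro n
    exact Finset.mem_Ico.mp (hφmem n)
  have hKφ : ∀ n, K (φ n) = K n := fun n => hKeq (hφIco n).1 (hφIco n).2
  have hφinj : Function.Injective φ := by
    intro n n' he
    have hkk : K n = K n' := by rw [← hKφ n, ← hKφ n', he]
    have h1 := hidx n
    have h2 := hidx n'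
    simp only [hφ] at he
    rw [hkk] at he h1
    rw [List.getD_eq_getElem _ _ h1, List.getD_eq_getElem _ _ h2] at he
    have hij := (List.Nodup.getElem_inj_iff (hLnodup (K n'))).mp he
    have h3 := hKle n
    have h4 := hKle n'
    rw [hkk] at h3
    omega
  have hφsurj : Function.Surjective φ := by
    intro m
    have hm : m ∈ I (K m) := Finset.mem_Ico.mpr ⟨hKle m, hKlt m⟩
    rw [← hLmem] at hm
    obtain ⟨j, hj, hjm⟩ := List.getElem_of_mem hm
    refine ⟨N (K m) + j, ?_⟩
    have hlen := hLlen (K m)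
    have hKn : K (N (K m) + j) = K m := hKeq (Nat.le_add_right _ _) (by omega)
    simp only [hφ]
    rw [hKn, Nat.add_sub_cancel_left, List.getD_eq_getElem _ _ hj]
    exact hjm
  set σ : Equiv.Perm ℕ := Equiv.ofBijective φ ⟨hφinj, hφsurj⟩ with hσdef
  have hσ : Tendsto (fun M : ℕ => ∑ m ∈ Finset.range M, v (φ m)) atTop (nhds x) := h σ
  -- image lemmas
  have himgsub1 : ∀ k, Finset.image φ (Finset.range (N (k + 1))) ⊆ Finset.range (N (k + 1)) := by
    intro k m hm
    obtain ⟨n, hn, rfl⟩ := Finset.mem_image.mp hm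
    rw [Finset.mem_range] at hn ⊢
    have hKn : K n + 1 ≤ k + 1 := by
      by_contra hc
      push_neg at hc
      have h3 : N (k + 1) ≤ N (K n) := hNmono.monotone (by omega)
      have := hKle n
      omega
    exact lt_of_lt_of_le (hφIco n).2 (hNmono.monotone hKn)
  have himg1 : ∀ k, Finset.image φ (Finset.range (N (k + 1))) = Finset.range (N (k + 1)) := by
    intro k
    apply Finset.eq_of_subset_of_card_le (himgsub1 k)
    rw [Finset.card_image_of_injective _ hφinj]
  have himg2 : ∀ k, Finset.image φ (Finset.range (N (k + 1) - (t k).card))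
      = Finset.range (N (k + 1)) \ t k := by
    intro k
    have htc := htcard k
    apply Finset.eq_of_subset_of_card_le
    · intro m hm
      obtain ⟨n, hn, rfl⟩ := Finset.mem_image.mp hm
      rw [Finset.mem_range] at hn
      rw [Finset.mem_sdiff, Finset.mem_range]
      rcases lt_or_ge n (N k) with hcase | hcase
      · -- φ n < N k
        have hKn1 : K n + 1 ≤ k := by
          by_contra hc
          push_neg at hc
          have h3 : N k ≤ N (K n) := hNmono.monotone (by omega)
          have := hKle n
          omega
        have hlt : φ n < N k := lt_of_lt_of_le (hφIco n).2 (hNmono.monotone hKn1)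
        have hkk1 : N k ≤ N (k + 1) := (hNlt k).le
        refine ⟨by omega, ?_⟩
        intro hmem
        have := (Finset.mem_Ico.mp (htsub k hmem)).1
        omega
      · -- N k ≤ n < N (k+1) - card t
        have hKn : K n = k := hKeq hcase (by omega)
        have hj : n - N (K n) < ((I k \ t k).sort (· ≤ ·)).length := by
          rw [hLlen1 k, hKn]
          omega
        have hj' : n - N k < ((I k \ t k).sort (· ≤ ·)).length := by
          rw [hLlen1 k]
          omega
        have hφval : φ n ∈ I k \ t k := by
          have hv : φ n = ((I k \ t k).sort (· ≤ ·)).getD (n - N k) 0 := by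
            simp only [hφ, hKn]
            exact List.getD_append _ _ _ _ hj'
          rw [hv, List.getD_eq_getElem _ _ hj', ← Finset.mem_sort (α := ℕ) (· ≤ ·)]
          exact List.getElem_mem _
        rw [Finset.mem_sdiff] at hφval
        constructor
        · have := (Finset.mem_Ico.mp hφval.1).2
          omega
        · exact hφval.2
    · have hsub : t k ⊆ Finset.range (N (k + 1)) := by
        intro m hm
        rw [Finset.mem_range]
        exact (Finset.mem_Ico.mp (htsub k hm)).2
      rw [Finset.card_image_of_injective _ hφinj, Finset.card_sdiff_of_subset hsub]
      simp only [Finset.card_range]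
      omega
  have hsum : ∀ k, ∑ m ∈ Finset.range (N (k + 1)), v (φ m)
      - ∑ m ∈ Finset.range (N (k + 1) - (t k).card), v (φ m) = ∑ i ∈ t k, v i := by
    intro k
    have e1 : ∑ m ∈ Finset.range (N (k + 1)), v (φ m)
        = ∑ i ∈ Finset.range (N (k + 1)), v i := by
      rw [← Finset.sum_image (fun a _ b _ hab => hφinj hab), himg1 k]
    have e2 : ∑ m ∈ Finset.range (N (k + 1) - (t k).card), v (φ m)
        = ∑ i ∈ Finset.range (N (k + 1)) \ t k, v i := by
      rw [← Finset.sum_image (fun a _ b _ hab => hφinj hab), himg2 k]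
    have hsub : t k ⊆ Finset.range (N (k + 1)) := by
      intro m hm
      rw [Finset.mem_range]
      exact (Finset.mem_Ico.mp (htsub k hm)).2
    rw [e1, e2, ← Finset.sum_sdiff hsub]
    abel
  -- convergence of the two subsequences
  have htend1 : Tendsto (fun k : ℕ => ∑ m ∈ Finset.range (N (k + 1)), v (φ m)) atTop (nhds x) := by
    refine hσ.comp (tendsto_atTop_mono (fun k => ?_) tendsto_id)
    show k ≤ N (k + 1)
    exact le_trans (Nat.le_succ k) (hNge (k + 1))
  have htend2 : Tendsto (fun k : ℕ => ∑ m ∈ Finset.range (N (k + 1) - (t k).card), v (φ m))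
      atTop (nhds x) := by
    refine hσ.comp (tendsto_atTop_mono (fun k => ?_) tendsto_id)
    show k ≤ N (k + 1) - (t k).card
    have := htcard k
    have := hNge k
    omega
  have hdiff : Tendsto (fun k : ℕ => ∑ i ∈ t k, v i) atTop (nhds 0) := by
    have := htend1.sub htend2
    rw [sub_self] at this
    exact this.congr hsum
  have hnorm : Tendsto (fun k : ℕ => ‖∑ i ∈ t k, v i‖) atTop (nhds 0) := by
    simpa using hdiff.norm
  have hev : ∀ᶠ k in atTop, ‖∑ i ∈ t k, v i‖ < ε := hnorm.eventually (gt_mem_nhds hε)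
  obtain ⟨k, hk⟩ := hev.exists
  exact absurd (hTbig (Finset.range (N k))) (not_le.mpr hk)

end Rearrangement

section Bounds

variable {𝕂 : Type*} [RCLike 𝕂]

lemma norm_I_le_one : ‖(RCLike.I : 𝕂)‖ ≤ 1 := by
  rcases @RCLike.I_mul_I_ax 𝕂 _ with h | h
  · rw [h, norm_zero]; exact zero_le_one
  · have h2 : ‖(RCLike.I : 𝕂)‖ * ‖(RCLike.I : 𝕂)‖ = 1 := by
      rw [← norm_mul, h, norm_neg, norm_one]
    nlinarith [norm_nonneg (RCLike.I : 𝕂)]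

lemma norm_le_abs_re_add_abs_im (z : 𝕂) : ‖z‖ ≤ |RCLike.re z| + |RCLike.im z| := by
  calc ‖z‖ = ‖(RCLike.re z : 𝕂) + (RCLike.im z : 𝕂) * RCLike.I‖ := by rw [RCLike.re_add_im]
    _ ≤ ‖(RCLike.re z : 𝕂)‖ + ‖(RCLike.im z : 𝕂) * RCLike.I‖ := norm_add_le _ _
    _ ≤ |RCLike.re z| + |RCLike.im z| := by
        rw [RCLike.norm_ofReal, norm_mul, RCLike.norm_ofReal]
        have h1 : |RCLike.im z| * ‖(RCLike.I : 𝕂)‖ ≤ |RCLike.im z| * 1 :=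
          mul_le_mul_of_nonneg_left norm_I_le_one (abs_nonneg _)
        rw [mul_one] at h1
        exact add_le_add le_rfl h1

lemma sum_abs_le_of_abs_sum_le {w : ℕ → ℝ} {C : ℝ}
    (hw : ∀ A : Finset ℕ, |∑ m ∈ A, w m| ≤ C) (A : Finset ℕ) :
    ∑ m ∈ A, |w m| ≤ 2 * C := by
  classical
  have key : ∑ m ∈ A, |w m|
      = ∑ m ∈ A.filter (fun m => 0 ≤ w m), w m
        - ∑ m ∈ A.filter (fun m => ¬ 0 ≤ w m), w m := by
    rw [← Finset.sum_filter_add_sum_filter_not A (fun m => 0 ≤ w m) (fun m => |w m|)]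
    rw [Finset.sum_congr rfl (fun m hm => abs_of_nonneg (Finset.mem_filter.mp hm).2),
      Finset.sum_congr rfl
        (fun m hm => abs_of_neg (not_le.mp (Finset.mem_filter.mp hm).2))]
    rw [Finset.sum_neg_distrib]
    ring
  rw [key]
  have h1 := hw (A.filter (fun m => 0 ≤ w m))
  have h2 := hw (A.filter (fun m => ¬ 0 ≤ w m))
  have := abs_le.mp h1
  have := abs_le.mp h2
  linarith [(abs_le.mp h1).2, (abs_le.mp h2).1, (abs_le.mp h2).2]

lemma sum_norm_le_of_norm_sum_le {w : ℕ → 𝕂} {C : ℝ}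
    (hw : ∀ A : Finset ℕ, ‖∑ m ∈ A, w m‖ ≤ C) (A : Finset ℕ) :
    ∑ m ∈ A, ‖w m‖ ≤ 4 * C := by
  have hre : ∀ A : Finset ℕ, |∑ m ∈ A, RCLike.re (w m)| ≤ C := by
    intro A
    rw [← map_sum]
    exact (RCLike.abs_re_le_norm _).trans (hw A)
  have him : ∀ A : Finset ℕ, |∑ m ∈ A, RCLike.im (w m)| ≤ C := by
    intro A
    rw [← map_sum]
    exact (RCLike.abs_im_le_norm _).trans (hw A)
  calc ∑ m ∈ A, ‖w m‖ ≤ ∑ m ∈ A, (|RCLike.re (w m)| + |RCLike.im (w m)|) :=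
        Finset.sum_le_sum fun m _ => norm_le_abs_re_add_abs_im (w m)
    _ = ∑ m ∈ A, |RCLike.re (w m)| + ∑ m ∈ A, |RCLike.im (w m)| := Finset.sum_add_distrib
    _ ≤ 2 * C + 2 * C := add_le_add (sum_abs_le_of_abs_sum_le hre A)
        (sum_abs_le_of_abs_sum_le him A)
    _ = 4 * C := by ring

variable {E : Type*} [NormedAddCommGroup E] [NormedSpace 𝕂 E]

lemma norm_sum_finset_le_of_summable {v : ℕ → E} [CompleteSpace E] (hv : Summable v) :
    ∃ C : ℝ, 0 ≤ C ∧ ∀ A : Finset ℕ, ‖∑ m ∈ A, v m‖ ≤ C := by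
  classical
  obtain ⟨s, hs⟩ := summable_iff_vanishing_norm.mp hv 1 one_pos
  refine ⟨∑ m ∈ s, ‖v m‖ + 1, by positivity, fun A => ?_⟩
  rw [← Finset.sum_inter_add_sum_sdiff A s v]
  calc ‖∑ m ∈ A ∩ s, v m + ∑ m ∈ A \ s, v m‖
      ≤ ‖∑ m ∈ A ∩ s, v m‖ + ‖∑ m ∈ A \ s, v m‖ := norm_add_le _ _
    _ ≤ ∑ m ∈ s, ‖v m‖ + 1 := by
        refine add_le_add ?_ (le_of_lt (hs _ (Finset.sdiff_disjoint)))
        calc ‖∑ m ∈ A ∩ s, v m‖ ≤ ∑ m ∈ A ∩ s, ‖v m‖ := norm_sum_le _ _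
          _ ≤ ∑ m ∈ s, ‖v m‖ := Finset.sum_le_sum_of_subset_of_nonneg
              (Finset.inter_subset_right) (fun m _ _ => norm_nonneg _)

end Bounds

section Helpers

lemma sum_range_mul_div_mod {M : Type*} [AddCommMonoid M] (k k' : ℕ) (h : ℕ → ℕ → M) :
    ∑ r ∈ Finset.range (k * k'), h (r / k') (r % k')
      = ∑ i ∈ Finset.range k, ∑ j ∈ Finset.range k', h i j := by
  rw [← Finset.sum_product']
  refine Finset.sum_nbij' (fun r => (r / k', r % k')) (fun p => p.1 * k' + p.2) ?_ ?_ ?_ ?_ ?_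
  · intro r hr
    rw [Finset.mem_range] at hr
    have hk' : 0 < k' := by
      rcases Nat.eq_zero_or_pos k' with h0 | h0
    -- if k' = 0 then k * k' = 0, contradiction
      · rw [h0, Nat.mul_zero] at hr; omega
      · exact h0
    rw [Finset.mem_product, Finset.mem_range, Finset.mem_range]
    exact ⟨Nat.div_lt_of_lt_mul (by rwa [Nat.mul_comm] at hr), Nat.mod_lt _ hk'⟩
  · rintro ⟨i, j⟩ hp
    rw [Finset.mem_product, Finset.mem_range, Finset.mem_range] at hp
    rw [Finset.mem_range]
    calc i * k' + j < i * k' + k' := by omega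
      _ = (i + 1) * k' := by ring
      _ ≤ k * k' := Nat.mul_le_mul_right _ (by omega)
  · intro r _
    exact Nat.div_add_mod' r k' 
  · rintro ⟨i, j⟩ hp
    rw [Finset.mem_product, Finset.mem_range, Finset.mem_range] at hp
    have hq : (i * k' + j) / k' = i := by
      rw [Nat.add_comm, Nat.add_mul_div_right _ _ (by omega : 0 < k'), Nat.div_eq_of_lt hp.2,
        Nat.zero_add]
    have hr : (i * k' + j) % k' = j := by
      rw [Nat.add_comm, Nat.add_mul_mod_self_right, Nat.mod_eq_of_lt hp.2]
    simp [hq, hr]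
  · intro r _
    rfl

end Helpers

section USBBound

variable {𝕂 : Type*} [RCLike 𝕂]
variable {E : Type*} [NormedAddCommGroup E] [NormedSpace 𝕂 E]

lemma dualPair_apply_tmul' {F : Type*} [NormedAddCommGroup F] [NormedSpace 𝕂 F]
    (f : E →L[𝕂] 𝕂) (g : F →L[𝕂] 𝕂) (x : E) (y : F) :
    dualPair f g (x ⊗ₜ[𝕂] y) = f x * g y := rfl

end USBBound

section MainAux

variable {𝕂 : Type*} [RCLike 𝕂]
variable {E : Type*} [NormedAddCommGroup E] [NormedSpace 𝕂 E]

lemma usb_abs_bound [CompleteSpace E] (a : ℕ → E) (b : ℕ → E →L[𝕂] 𝕂)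
    (hF : IsUnconditionalSchauderBasis a b) (x : E) :
    ∃ C : ℝ, 0 ≤ C ∧ ∀ f : E →L[𝕂] 𝕂, ‖f‖ ≤ 1 →
      ∀ A : Finset ℕ, ∑ m ∈ A, ‖b m x‖ * ‖f (a m)‖ ≤ C := by
  have hsummable : Summable (fun m : ℕ => b m x • a m) :=
    summable_of_forall_perm_tendsto _ x (hF.2 x)
  obtain ⟨C, hC0, hC⟩ := norm_sum_finset_le_of_summable hsummable
  refine ⟨4 * C, by positivity, fun f hf A => ?_⟩
  have hw : ∀ A : Finset ℕ, ‖∑ m ∈ A, b m x * f (a m)‖ ≤ C := by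
    intro A
    have he : ∑ m ∈ A, b m x * f (a m) = f (∑ m ∈ A, b m x • a m) := by
      rw [map_sum]
      exact Finset.sum_congr rfl fun m _ => by rw [map_smul, smul_eq_mul]
    rw [he]
    calc ‖f (∑ m ∈ A, b m x • a m)‖ ≤ ‖f‖ * ‖∑ m ∈ A, b m x • a m‖ := f.le_opNorm _
      _ ≤ 1 * C := mul_le_mul hf (hC A) (norm_nonneg _) zero_le_one
      _ = C := one_mul C
  have h4 := sum_norm_le_of_norm_sum_le hw A
  calc ∑ m ∈ A, ‖b m x‖ * ‖f (a m)‖ = ∑ m ∈ A, ‖b m x * f (a m)‖ :=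
        Finset.sum_congr rfl fun m _ => (norm_mul _ _).symm
    _ ≤ 4 * C := h4

end MainAux

/-- For Banach spaces `E, F` with unconditional Schauder bases
`𝓕 = ((a_m, b_m*))`, `𝓖 = ((x_n, y_n*))`, and any finitely supported scalar family
`(λ_{i,j})`, the Besselian crossnorm of `∑_{i<k} ∑_{j<k'} λ_{i,j} a_i ⊗ x_j` equals
`sup_{‖f*‖≤1, ‖g*‖≤1} ∑_{i<k} ∑_{j<k'} |λ_{i,j}| |f*(a_i)| |g*(x_j)|`. -/

theorem alphaBess_basis_combination [CompleteSpace E] [CompleteSpace F]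
    (a : ℕ → E) (b : ℕ → E →L[𝕂] 𝕂) (c : ℕ → F) (d : ℕ → F →L[𝕂] 𝕂)
    (hF : IsUnconditionalSchauderBasis a b) (hG : IsUnconditionalSchauderBasis c d)
    (k k' : ℕ) (lam : ℕ → ℕ → 𝕂) :
    alphaBess a b c d
        (∑ i ∈ Finset.range k, ∑ j ∈ Finset.range k', lam i j • (a i ⊗ₜ[𝕂] c j)) =
      ⨆ fg : {f : E →L[𝕂] 𝕂 // ‖f‖ ≤ 1} × {g : F →L[𝕂] 𝕂 // ‖g‖ ≤ 1},
        ∑ i ∈ Finset.range k, ∑ j ∈ Finset.range k',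
          ‖lam i j‖ * ‖fg.1.1 (a i)‖ * ‖fg.2.1 (c j)‖ := by
  classical
  choose CE hCE0 hCE using fun z : E => usb_abs_bound a b hF z
  choose CF hCF0 hCF using fun w : F => usb_abs_bound c d hG w
  have hsumE : ∀ (z : E) (f : E →L[𝕂] 𝕂), ‖f‖ ≤ 1 →
      Summable (fun m : ℕ => ‖b m z‖ * ‖f (a m)‖) := fun z f hf =>
    summable_of_sum_le (fun m => mul_nonneg (norm_nonneg _) (norm_nonneg _)) (hCE z f hf)
  have htsumE : ∀ (z : E) (f : E →L[𝕂] 𝕂), ‖f‖ ≤ 1 →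
      ∑' m : ℕ, ‖b m z‖ * ‖f (a m)‖ ≤ CE z := fun z f hf =>
    Summable.tsum_le_of_sum_le (hsumE z f hf) (hCE z f hf)
  have hsumF : ∀ (w : F) (g : F →L[𝕂] 𝕂), ‖g‖ ≤ 1 →
      Summable (fun n : ℕ => ‖d n w‖ * ‖g (c n)‖) := fun w g hg =>
    summable_of_sum_le (fun n => mul_nonneg (norm_nonneg _) (norm_nonneg _)) (hCF w g hg)
  have htsumF : ∀ (w : F) (g : F →L[𝕂] 𝕂), ‖g‖ ≤ 1 →
      ∑' n : ℕ, ‖d n w‖ * ‖g (c n)‖ ≤ CF w := fun w g hg =>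
    Summable.tsum_le_of_sum_le (hsumF w g hg) (hCF w g hg)
  have hprod : ∀ (z : E) (w : F) (f : E →L[𝕂] 𝕂) (g : F →L[𝕂] 𝕂), ‖f‖ ≤ 1 → ‖g‖ ≤ 1 →
      Summable (fun mn : ℕ × ℕ => ‖b mn.1 z‖ * ‖d mn.2 w‖ * ‖f (a mn.1)‖ * ‖g (c mn.2)‖) ∧
      ∑' mn : ℕ × ℕ, ‖b mn.1 z‖ * ‖d mn.2 w‖ * ‖f (a mn.1)‖ * ‖g (c mn.2)‖ ≤ CE z * CF w := by
    intro z w f g hf hg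
    have heq : (fun mn : ℕ × ℕ => ‖b mn.1 z‖ * ‖d mn.2 w‖ * ‖f (a mn.1)‖ * ‖g (c mn.2)‖)
        = fun mn : ℕ × ℕ => (‖b mn.1 z‖ * ‖f (a mn.1)‖) * (‖d mn.2 w‖ * ‖g (c mn.2)‖) := by
      funext mn; ring
    have hp := hsumE z f hf
    have hq := hsumF w g hg
    have hpq := hp.mul_of_nonneg hq
      (fun m => mul_nonneg (norm_nonneg _) (norm_nonneg _))
      (fun n => mul_nonneg (norm_nonneg _) (norm_nonneg _))
    constructor
    · rw [heq]; exact hpq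
    · rw [heq, (hp.hasSum.mul hq.hasSum hpq).tsum_eq]
      exact mul_le_mul (htsumE z f hf) (htsumF w g hg)
        (tsum_nonneg fun n => mul_nonneg (norm_nonneg _) (norm_nonneg _)) (hCE0 z)
  set S : ℝ := ⨆ fg : {f : E →L[𝕂] 𝕂 // ‖f‖ ≤ 1} × {g : F →L[𝕂] 𝕂 // ‖g‖ ≤ 1},
      ∑ i ∈ Finset.range k, ∑ j ∈ Finset.range k',
        ‖lam i j‖ * ‖fg.1.1 (a i)‖ * ‖fg.2.1 (c j)‖ with hSdef
  set x0 : ℕ → E := fun r => lam (r / k') (r % k') • a (r / k') with hx0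
  set y0 : ℕ → F := fun r => c (r % k') with hy0
  have hrep : (∑ i ∈ Finset.range k, ∑ j ∈ Finset.range k', lam i j • (a i ⊗ₜ[𝕂] c j))
      = ∑ r ∈ Finset.range (k * k'), x0 r ⊗ₜ[𝕂] y0 r := by
    rw [← sum_range_mul_div_mod k k' (fun i j => lam i j • (a i ⊗ₜ[𝕂] c j))]
    refine Finset.sum_congr rfl fun r _ => ?_
    simp only [hx0, hy0, TensorProduct.smul_tmul']
  have hcan : bessRep a b c d (k * k') x0 y0 = S := by
    rw [hSdef]
    unfold bessRep
    refine iSup_congr ?_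
    rintro ⟨⟨f, hf⟩, ⟨g, hg⟩⟩
    rw [← sum_range_mul_div_mod k k' (fun i j => ‖lam i j‖ * ‖f (a i)‖ * ‖g (c j)‖)]
    refine Finset.sum_congr rfl fun r hr => ?_
    have hzero : ∀ mn : ℕ × ℕ, mn ≠ (r / k', r % k') →
        ‖b mn.1 (x0 r)‖ * ‖d mn.2 (y0 r)‖ * ‖f (a mn.1)‖ * ‖g (c mn.2)‖ = 0 := by
      rintro ⟨m, n⟩ hmn
      simp only [hx0, hy0]
      by_cases hm : m = r / k'
      · have hn : n ≠ r % k' := fun h => hmn (by rw [hm, h])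
        have hd0 : d n (c (r % k')) = 0 := by rw [hG.1 n (r % k'), if_neg hn]
        rw [hd0]
        simp
      · have hb0 : b m (lam (r / k') (r % k') • a (r / k')) = 0 := by
          rw [map_smul, smul_eq_mul, hF.1 m (r / k'), if_neg hm, mul_zero]
        rw [hb0]
        simp
    rw [tsum_eq_single (r / k', r % k') hzero]
    simp only [hx0, hy0, map_smul, smul_eq_mul, hF.1, hG.1, if_pos rfl]
    simp [norm_one]
  have hmem : S ∈ {t : ℝ | ∃ (R : ℕ) (x : ℕ → E) (y : ℕ → F),
      (∑ i ∈ Finset.range k, ∑ j ∈ Finset.range k', lam i j • (a i ⊗ₜ[𝕂] c j))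
        = ∑ r ∈ Finset.range R, x r ⊗ₜ[𝕂] y r ∧ t = bessRep a b c d R x y} :=
    ⟨k * k', x0, y0, hrep, hcan.symm⟩
  have hlb : ∀ t ∈ {t : ℝ | ∃ (R : ℕ) (x : ℕ → E) (y : ℕ → F),
      (∑ i ∈ Finset.range k, ∑ j ∈ Finset.range k', lam i j • (a i ⊗ₜ[𝕂] c j))
        = ∑ r ∈ Finset.range R, x r ⊗ₜ[𝕂] y r ∧ t = bessRep a b c d R x y}, S ≤ t := by
    rintro t ⟨R, x, y, hxy, rfl⟩
    unfold bessRep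
    rw [hSdef]
    refine ciSup_mono ⟨∑ r ∈ Finset.range R, CE (x r) * CF (y r), ?_⟩ ?_
    · rintro s ⟨⟨⟨f, hf⟩, ⟨g, hg⟩⟩, rfl⟩
      exact Finset.sum_le_sum fun r _ => (hprod (x r) (y r) f g hf hg).2
    rintro ⟨⟨f, hf⟩, ⟨g, hg⟩⟩
    have hlam : ∀ i, i < k → ∀ j, j < k' →
        lam i j = ∑ r ∈ Finset.range R, b i (x r) * d j (y r) := by
      intro i hi j hj
      have hterm : ∀ i' j', dualPair (b i) (d j) (lam i' j' • (a i' ⊗ₜ[𝕂] c j'))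
          = (if i = i' then (1 : 𝕂) else 0) * ((if j = j' then (1 : 𝕂) else 0) * lam i' j') := by
        intro i' j'
        rw [map_smul, smul_eq_mul, dualPair_apply_tmul', hF.1, hG.1]
        ring
      have hL' : dualPair (b i) (d j) (∑ i' ∈ Finset.range k, ∑ j' ∈ Finset.range k',
          lam i' j' • (a i' ⊗ₜ[𝕂] c j')) = lam i j := by
        rw [map_sum]
        have houter : ∀ i' ∈ Finset.range k, i' ≠ i →
            dualPair (b i) (d j)
              (∑ j' ∈ Finset.range k', lam i' j' • (a i' ⊗ₜ[𝕂] c j')) = 0 := by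
          intro i' _ hi'
          rw [map_sum]
          refine Finset.sum_eq_zero fun j' _ => ?_
          rw [hterm, if_neg (Ne.symm hi'), zero_mul]
        rw [Finset.sum_eq_single_of_mem i (Finset.mem_range.mpr hi) houter, map_sum]
        have hinner : ∀ j' ∈ Finset.range k', j' ≠ j →
            dualPair (b i) (d j) (lam i j' • (a i ⊗ₜ[𝕂] c j')) = 0 := by
          intro j' _ hj'
          rw [hterm]
          simp [Ne.symm hj']
        rw [Finset.sum_eq_single_of_mem j (Finset.mem_range.mpr hj) hinner, hterm]
        simp
      have hR' : dualPair (b i) (d j) (∑ r ∈ Finset.range R, x r ⊗ₜ[𝕂] y r)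
          = ∑ r ∈ Finset.range R, b i (x r) * d j (y r) := by
        rw [map_sum]
        exact Finset.sum_congr rfl fun r _ => dualPair_apply_tmul' _ _ _ _
      rw [← hL', hxy, hR']
    calc ∑ i ∈ Finset.range k, ∑ j ∈ Finset.range k',
          ‖lam i j‖ * ‖f (a i)‖ * ‖g (c j)‖
        = ∑ p ∈ Finset.range k ×ˢ Finset.range k',
            ‖lam p.1 p.2‖ * ‖f (a p.1)‖ * ‖g (c p.2)‖ := by
          rw [Finset.sum_product]
      _ ≤ ∑ p ∈ Finset.range k ×ˢ Finset.range k', ∑ r ∈ Finset.range R,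
            ‖b p.1 (x r)‖ * ‖d p.2 (y r)‖ * ‖f (a p.1)‖ * ‖g (c p.2)‖ := by
          refine Finset.sum_le_sum ?_
          rintro ⟨i, j⟩ hp
          rw [Finset.mem_product, Finset.mem_range, Finset.mem_range] at hp
          rw [← Finset.sum_mul, ← Finset.sum_mul]
          have hle : ‖lam i j‖ ≤ ∑ r ∈ Finset.range R, ‖b i (x r)‖ * ‖d j (y r)‖ := by
            rw [hlam i hp.1 j hp.2]
            refine (norm_sum_le _ _).trans ?_
            exact Finset.sum_le_sum fun r _ => norm_mul_le _ _
          gcongr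
      _ = ∑ r ∈ Finset.range R, ∑ p ∈ Finset.range k ×ˢ Finset.range k',
            ‖b p.1 (x r)‖ * ‖d p.2 (y r)‖ * ‖f (a p.1)‖ * ‖g (c p.2)‖ := Finset.sum_comm
      _ ≤ ∑ r ∈ Finset.range R, ∑' mn : ℕ × ℕ,
            ‖b mn.1 (x r)‖ * ‖d mn.2 (y r)‖ * ‖f (a mn.1)‖ * ‖g (c mn.2)‖ := by
          refine Finset.sum_le_sum fun r _ => ?_
          exact Summable.sum_le_tsum _ (fun mn _ => by positivity) (hprod (x r) (y r) f g hf hg).1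
  unfold alphaBess
  exact le_antisymm (csInf_le ⟨S, fun t ht => hlb t ht⟩ hmem) (le_csInf ⟨S, hmem⟩ hlb)
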